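/- Let p be a point in the plane, and let r₁, r₂, r₃, r₄ be four distinct rays from p, listed counterclockwise, with angles α_i = ∠(r_i, r_{i+1}) (indices mod 4). Suppose α₁ = α₃ and α₂ < π and α₄ < π. Let C₂ be the closed cone between r₂ and r₃ and C₄ the closed cone between r₄ and r₁, and let σ be any closed strip of width 1 containing p whose boundary lines are perpendicular to the common angle bisector direction of C₂ and C₄. Then every point of σ ∩ (C₂ ∪ C₄) is at distance at most max(1/cos(α₂/2), 1/cos(α₄/2)) from p. -/

import Mathlib

open Complex

/-- Strip lemma. Four rays from `p` at directions `β₁ < β₂ < β₃ < β₄ < β₁ + 2π`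
(counterclockwise), with angles `α₁ = β₂−β₁`, `α₂ = β₃−β₂`, `α₃ = β₄−β₃`,
`α₄ = β₁+2π−β₄`. Assume `α₁ = α₃`, `α₂ < π` and `α₄ < π`. Then the cones
`C₂` (between `r₂` and `r₃`) and `C₄` (between `r₄` and `r₁`) have a common bisector line of
direction `γ = (β₂+β₃)/2`, and for any closed strip of width `1` containing `p` whose
boundary lines are perpendicular to this bisector direction, every point of
`σ ∩ (C₂ ∪ C₄)` is at distance at most `max (1/cos(α₂/2)) (1/cos(α₄/2))` from `p`. -/
theorem stmt_13 (p : ℂ) (β₁ β₂ β₃ β₄ : ℝ)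
    (h12 : β₁ < β₂) (h23 : β₂ < β₃) (h34 : β₃ < β₄) (h41 : β₄ < β₁ + 2 * Real.pi)
    (hα13 : β₂ - β₁ = β₄ - β₃)
    (hα2 : β₃ - β₂ < Real.pi) (hα4 : β₁ + 2 * Real.pi - β₄ < Real.pi)
    (c : ℝ) (hc0 : c ≤ 0) (hc1 : 0 ≤ c + 1)
    (x : ℂ)
    -- `x` lies in the strip of width 1, perpendicular to the bisector direction
    -- `γ = (β₂+β₃)/2`, which contains `p` (since `c ≤ 0 ≤ c+1`):
    (hstrip₁ : c ≤ ((x - p) * (starRingEnd ℂ) (Complex.exp (((β₂ + β₃) / 2 : ℝ) * Complex.I))).re)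
    (hstrip₂ : ((x - p) * (starRingEnd ℂ) (Complex.exp (((β₂ + β₃) / 2 : ℝ) * Complex.I))).re ≤ c + 1)
    -- `x` lies in the closed cone `C₂` or in the closed cone `C₄`:
    (hcone : ∃ t θ : ℝ, 0 ≤ t ∧ x - p = (t : ℂ) * Complex.exp ((θ : ℝ) * Complex.I) ∧
      ((β₂ ≤ θ ∧ θ ≤ β₃) ∨ (β₄ ≤ θ ∧ θ ≤ β₁ + 2 * Real.pi))) :
    dist x p ≤ max (1 / Real.cos ((β₃ - β₂) / 2))
      (1 / Real.cos ((β₁ + 2 * Real.pi - β₄) / 2)) := by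
  obtain ⟨t, θ, ht, hx, hθ⟩ := hcone
  have hπ := Real.pi_pos
  set γ : ℝ := (β₂ + β₃) / 2 with hγ
  have hconj : (starRingEnd ℂ) (Complex.exp ((γ : ℝ) * Complex.I))
      = Complex.exp ((-γ : ℝ) * Complex.I) := by
    rw [← Complex.exp_conj, map_mul, Complex.conj_I, Complex.conj_ofReal]
    push_cast; ring_nf
  have hre : ((x - p) * (starRingEnd ℂ) (Complex.exp ((γ : ℝ) * Complex.I))).re
      = t * Real.cos (θ - γ) := by
    rw [hx, hconj, mul_assoc, ← Complex.exp_add]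
    have : (θ : ℂ) * Complex.I + (-γ : ℝ) * Complex.I = ((θ - γ : ℝ)) * Complex.I := by
      push_cast; ring
    rw [this, Complex.re_ofReal_mul, Complex.exp_ofReal_mul_I_re]
  rw [hre] at hstrip₁ hstrip₂
  have hdist : dist x p = t := by
    rw [Complex.dist_eq, hx, norm_mul, Complex.norm_exp_ofReal_mul_I,
      Complex.norm_real, Real.norm_eq_abs, _root_.abs_of_nonneg ht, mul_one]
  rw [hdist]
  rcases hθ with ⟨hl, hr⟩ | ⟨hl, hr⟩
  · -- cone C₂
    have habs : |θ - γ| ≤ (β₃ - β₂) / 2 := by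
      rw [abs_le]; constructor <;> [skip; skip] <;> simp only [hγ] <;> linarith
    have hcos : Real.cos ((β₃ - β₂) / 2) ≤ Real.cos (θ - γ) := by
      rw [← Real.cos_abs (θ - γ)]
      exact Real.cos_le_cos_of_nonneg_of_le_pi (abs_nonneg _) (by linarith) habs
    have hcpos : 0 < Real.cos ((β₃ - β₂) / 2) :=
      Real.cos_pos_of_mem_Ioo ⟨by linarith, by linarith⟩
    have h1 : t * Real.cos ((β₃ - β₂) / 2) ≤ 1 :=
      le_trans (mul_le_mul_of_nonneg_left hcos ht) (by linarith)
    refine le_trans ?_ (le_max_left _ _)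
    rw [le_div_iff₀ hcpos]
    linarith
  · -- cone C₄
    have hcoseq : Real.cos (θ - γ) = -Real.cos (θ - γ - Real.pi) := by
      have h := Real.cos_add_pi (θ - γ - Real.pi)
      rw [sub_add_cancel] at h
      linarith
    rw [hcoseq] at hstrip₁
    have habs : |θ - γ - Real.pi| ≤ (β₁ + 2 * Real.pi - β₄) / 2 := by
      rw [abs_le]; constructor <;> simp only [hγ] <;> linarith
    have hcos : Real.cos ((β₁ + 2 * Real.pi - β₄) / 2) ≤ Real.cos (θ - γ - Real.pi) := by
      rw [← Real.cos_abs (θ - γ - Real.pi)]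
      exact Real.cos_le_cos_of_nonneg_of_le_pi (abs_nonneg _) (by linarith) habs
    have hcpos : 0 < Real.cos ((β₁ + 2 * Real.pi - β₄) / 2) :=
      Real.cos_pos_of_mem_Ioo ⟨by linarith, by linarith⟩
    have h1 : t * Real.cos ((β₁ + 2 * Real.pi - β₄) / 2) ≤ 1 := by
      have := mul_le_mul_of_nonneg_left hcos ht
      nlinarith
    refine le_trans ?_ (le_max_right _ _)
    rw [le_div_iff₀ hcpos]
    linarith
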